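/- arXiv:1601.02208 — 2 statements merged into one kernel-verified Lean document; each statement's English description precedes it below -/
import Mathlib

section
/- For every z ∈ ℂ^n − Δ and all distinct indices i_1, i_2,...,i_{k+1} ∈ {1,...,n}, the following multiplication formula holds in A_z: f_{i_1,i_2,...,i_{k+1}}(z) · p_{i_1}(z) · w_{i_2,...,i_{k+1}} = d_{i_2,...,i_{k+1}} · ∑_{ℓ=1}^{k+1} (-1)^{ℓ+1} a_{i_ℓ} w_{i_1,...,\hat{i_ℓ},...,i_{k+1}}, where the hat denotes omission of the index i_ℓ. -/
open MvPolynomial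

noncomputable section

/-- The determinant `d_{l 1, …, l k}` of the `k × k` matrix whose `m`-th column consists of
`b (l m) 1, …, b (l m) k`. -/
def dd {n k : ℕ} (b : Fin n → Fin k → ℂ) (l : Fin k → Fin n) : ℂ :=
  Matrix.det (Matrix.of fun j m => b (l m) j)

/-- `f_i(t,z) = ∑_j b_i^j t_j + z_i` as a polynomial in `t = (t_1,…,t_k)`. -/
def fpoly {n k : ℕ} (b : Fin n → Fin k → ℂ) (z : Fin n → ℂ) (i : Fin n) :
    MvPolynomial (Fin k) ℂ :=
  (∑ j, C (b i j) * X j) + C (z i)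

/-- `f_{i_1,…,i_{k+1}}(z) = ∑_{l=1}^{k+1} (-1)^{l-1} d_{i_1,…,î_l,…,i_{k+1}} z_{i_l}`. -/
def fF {n k : ℕ} (b : Fin n → Fin k → ℂ) (z : Fin n → ℂ) (I : Fin (k + 1) → Fin n) : ℂ :=
  ∑ l : Fin (k + 1), (-1) ^ (l : ℕ) * dd b (I ∘ l.succAbove) * z (I l)

/-- The discriminant `Δ ⊂ ℂⁿ`, the union over `1 ≤ i_1 < … < i_{k+1} ≤ n` of the zero sets of
the `f_{i_1,…,i_{k+1}}`. -/
def discr {n k : ℕ} (b : Fin n → Fin k → ℂ) : Set (Fin n → ℂ) :=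
  {z | ∃ I : Fin (k + 1) → Fin n, StrictMono I ∧ fF b z I = 0}

/-- The multiplicative set generated by `f_1(t,z), …, f_n(t,z)`. -/
def Sz {n k : ℕ} (b : Fin n → Fin k → ℂ) (z : Fin n → ℂ) :
    Submonoid (MvPolynomial (Fin k) ℂ) :=
  Submonoid.closure (Set.range (fpoly b z))

/-- `R_z`, the localization of `ℂ[t_1,…,t_k]` at the multiplicative set generated by the
`f_i(t,z)`. -/
abbrev Rz {n k : ℕ} (b : Fin n → Fin k → ℂ) (z : Fin n → ℂ) :=
  Localization (Sz b z)

lemma fpoly_mem {n k : ℕ} (b : Fin n → Fin k → ℂ) (z : Fin n → ℂ) (i : Fin n) :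
    fpoly b z i ∈ Sz b z :=
  Submonoid.subset_closure ⟨i, rfl⟩

/-- `∂Φ/∂t_m = ∑_i a_i b_i^m / f_i(t,z)` as an element of `R_z`. -/
def dPhi {n k : ℕ} (a : Fin n → ℂ) (b : Fin n → Fin k → ℂ) (z : Fin n → ℂ)
    (m : Fin k) : Rz b z :=
  ∑ i, Localization.mk (C (a i * b i m)) ⟨fpoly b z i, fpoly_mem b z i⟩

/-- The ideal `I_z ⊆ R_z` generated by the `∂Φ/∂t_m`, `m = 1,…,k`. -/
def Iz {n k : ℕ} (a : Fin n → ℂ) (b : Fin n → Fin k → ℂ) (z : Fin n → ℂ) :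
    Ideal (Rz b z) :=
  Ideal.span (Set.range (dPhi a b z))

/-- The algebra `A_z = R_z / I_z`. -/
abbrev Az {n k : ℕ} (a : Fin n → ℂ) (b : Fin n → Fin k → ℂ) (z : Fin n → ℂ) :=
  Rz b z ⧸ Iz a b z

/-- `p_j(z) = [a_j / f_j(t,z)] ∈ A_z`. -/
def pz {n k : ℕ} (a : Fin n → ℂ) (b : Fin n → Fin k → ℂ) (z : Fin n → ℂ)
    (j : Fin n) : Az a b z :=
  Ideal.Quotient.mk _ (Localization.mk (C (a j)) ⟨fpoly b z j, fpoly_mem b z j⟩)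

/-- The canonical map `ℂ → A_z` (scalars). -/
def cA {n k : ℕ} (a : Fin n → ℂ) (b : Fin n → Fin k → ℂ) (z : Fin n → ℂ)
    (c : ℂ) : Az a b z :=
  @algebraMap ℂ (Az a b z) _ inferInstance inferInstance c

/-- `w_{i_1,…,i_k} = d_{i_1,…,i_k} p_{i_1}(z) ⋯ p_{i_k}(z) ∈ A_z`. -/
def wz {n k : ℕ} (a : Fin n → ℂ) (b : Fin n → Fin k → ℂ) (z : Fin n → ℂ)
    (l : Fin k → Fin n) : Az a b z :=
  cA a b z (dd b l) * ∏ m, pz a b z (l m)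

/-- The image of a polynomial in the field of rational functions `ℂ(t_1,…,t_k)`. -/
def toF {k : ℕ} (q : MvPolynomial (Fin k) ℂ) : FractionRing (MvPolynomial (Fin k) ℂ) :=
  algebraMap _ _ q


section AuxStmt10

variable {n k' : ℕ} (b : Fin n → Fin (k' + 1) → ℂ) (z : Fin n → ℂ)
  (I : Fin (k' + 2) → Fin n)

/-- Cofactor expansion of a determinant with a repeated row: the alternating sum of
the minors `dd b (I ∘ l.succAbove)` weighted by `b (I l) j` vanishes. -/
lemma aux_det_zero (j : Fin (k' + 1)) :
    ∑ l : Fin (k' + 2), (-1) ^ (l : ℕ) * dd b (I ∘ l.succAbove) * b (I l) j = 0 := by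
  have h0 : (Matrix.of fun r m : Fin (k' + 2) => b (I m) (Fin.cases j id r)).det = 0 := by
    apply Matrix.det_zero_of_row_eq (i := (0 : Fin (k' + 2))) (j := j.succ)
    · exact (Fin.succ_ne_zero j).symm
    · funext m; simp
  rw [Matrix.det_succ_row_zero] at h0
  rw [← h0]
  refine Finset.sum_congr rfl fun l _ => ?_
  have hdd : dd b (I ∘ l.succAbove)
      = ((Matrix.of fun r m : Fin (k' + 2) => b (I m) (Fin.cases j id r)).submatrix
          Fin.succ l.succAbove).det := by
    unfold dd
    congr 1
  rw [hdd]
  simp [Matrix.of_apply]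
  ring

/-- The key polynomial identity: an alternating combination of the `fpoly`'s is constant. -/
lemma aux_poly :
    ∑ l : Fin (k' + 2), C ((-1) ^ (l : ℕ) * dd b (I ∘ l.succAbove)) * fpoly b z (I l)
      = (C (fF b z I) : MvPolynomial (Fin (k' + 1)) ℂ) := by
  have hterm : ∀ l : Fin (k' + 2),
      C ((-1) ^ (l : ℕ) * dd b (I ∘ l.succAbove)) * fpoly b z (I l)
        = (∑ j, C ((-1) ^ (l : ℕ) * dd b (I ∘ l.succAbove) * b (I l) j) * X j)
          + C ((-1) ^ (l : ℕ) * dd b (I ∘ l.succAbove) * z (I l)) := by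
    intro l
    simp [fpoly, mul_add, Finset.mul_sum, mul_assoc]
  rw [Finset.sum_congr rfl fun l _ => hterm l, Finset.sum_add_distrib, Finset.sum_comm]
  have hz0 : ∀ j : Fin (k' + 1),
      ∑ l : Fin (k' + 2),
        (C ((-1) ^ (l : ℕ) * dd b (I ∘ l.succAbove) * b (I l) j)
          : MvPolynomial (Fin (k' + 1)) ℂ) * X j = 0 := by
    intro j
    rw [← Finset.sum_mul, ← map_sum, aux_det_zero b I j, map_zero, zero_mul]
  rw [Finset.sum_congr rfl fun j _ => hz0 j, Finset.sum_const, smul_zero, zero_add,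
    ← map_sum]
  rfl

/-- Cancellation in the localization: `f_i ⬝ (c / f_i) = c`. -/
lemma aux_cancel (i : Fin n) (c : ℂ) :
    algebraMap (MvPolynomial (Fin (k' + 1)) ℂ) (Rz b z) (fpoly b z i)
        * Localization.mk (C c) ⟨fpoly b z i, fpoly_mem b z i⟩
      = algebraMap (MvPolynomial (Fin (k' + 1)) ℂ) (Rz b z) (C c) := by
  rw [← Localization.mk_one_eq_algebraMap, ← Localization.mk_one_eq_algebraMap,
    Localization.mk_mul, Localization.mk_eq_mk_iff, Localization.r_iff_exists]
  exact ⟨1, by push_cast; ring⟩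

/-- The multiplication formula, already at the level of `R_z`. -/
lemma aux_key (a : Fin n → ℂ) :
    algebraMap (MvPolynomial (Fin (k' + 1)) ℂ) (Rz b z) (C (fF b z I))
        * ∏ m : Fin (k' + 2),
            Localization.mk (C (a (I m))) ⟨fpoly b z (I m), fpoly_mem b z (I m)⟩
      = ∑ l : Fin (k' + 2),
          algebraMap (MvPolynomial (Fin (k' + 1)) ℂ) (Rz b z)
              (C ((-1) ^ (l : ℕ) * dd b (I ∘ l.succAbove) * a (I l)))
            * ∏ m : Fin (k' + 1),
                Localization.mk (C (a (I (l.succAbove m))))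
                  ⟨fpoly b z (I (l.succAbove m)), fpoly_mem b z (I (l.succAbove m))⟩ := by
  rw [← aux_poly b z I, map_sum, Finset.sum_mul]
  refine Finset.sum_congr rfl fun l _ => ?_
  rw [Fin.prod_univ_succAbove
    (fun m => Localization.mk (C (a (I m))) ⟨fpoly b z (I m), fpoly_mem b z (I m)⟩) l,
    map_mul]
  calc algebraMap (MvPolynomial (Fin (k' + 1)) ℂ) (Rz b z)
            (C ((-1) ^ (l : ℕ) * dd b (I ∘ l.succAbove)))
          * algebraMap (MvPolynomial (Fin (k' + 1)) ℂ) (Rz b z) (fpoly b z (I l))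
          * (Localization.mk (C (a (I l))) ⟨fpoly b z (I l), fpoly_mem b z (I l)⟩
            * ∏ m : Fin (k' + 1),
                Localization.mk (C (a (I (l.succAbove m))))
                  ⟨fpoly b z (I (l.succAbove m)), fpoly_mem b z (I (l.succAbove m))⟩)
      = algebraMap (MvPolynomial (Fin (k' + 1)) ℂ) (Rz b z)
            (C ((-1) ^ (l : ℕ) * dd b (I ∘ l.succAbove)))
          * (algebraMap (MvPolynomial (Fin (k' + 1)) ℂ) (Rz b z) (fpoly b z (I l))
            * Localization.mk (C (a (I l))) ⟨fpoly b z (I l), fpoly_mem b z (I l)⟩)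
          * ∏ m : Fin (k' + 1),
              Localization.mk (C (a (I (l.succAbove m))))
                ⟨fpoly b z (I (l.succAbove m)), fpoly_mem b z (I (l.succAbove m))⟩ := by
        ring
    _ = _ := by
        rw [aux_cancel, ← map_mul, ← C_mul]

end AuxStmt10

set_option synthInstance.maxHeartbeats 1000000
set_option maxHeartbeats 1000000

/-- Fix `n > k ≥ 1` (here `k = k' + 1`), numbers `b_i^j` with all determinants
`d_{i_1,…,i_k}` (distinct indices) nonzero, weights `a_i ∈ ℂ^×` with `|a| = ∑ a_i ≠ 0`, and
`z ∈ ℂⁿ − Δ`.  Then for all distinct indices `i_1,i_2,…,i_{k+1}` (given by the tuple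
`I : Fin (k+1) → Fin n`, so `i_1 = I 0` and `(i_2,…,i_{k+1}) = I ∘ Fin.succ`), the
multiplication formula
`f_{i_1,…,i_{k+1}}(z) ⬝ p_{i_1}(z) ⬝ w_{i_2,…,i_{k+1}} =
  d_{i_2,…,i_{k+1}} ⬝ ∑_{ℓ=1}^{k+1} (-1)^{ℓ+1} a_{i_ℓ} w_{i_1,…,î_ℓ,…,i_{k+1}}`
holds in `A_z`. -/
theorem stmt10 (n k' : ℕ) (hnk : k' + 1 < n) (b : Fin n → Fin (k' + 1) → ℂ)
    (hd : ∀ l : Fin (k' + 1) → Fin n, Function.Injective l → dd b l ≠ 0)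
    (a : Fin n → ℂ) (ha : ∀ i, a i ≠ 0) (hsum : ∑ i, a i ≠ 0)
    (z : Fin n → ℂ) (hz : z ∉ discr b)
    (I : Fin (k' + 2) → Fin n) (hI : Function.Injective I) :
    cA a b z (fF b z I) * pz a b z (I 0) * wz a b z (I ∘ Fin.succ)
      = cA a b z (dd b (I ∘ Fin.succ)) *
          ∑ ℓ : Fin (k' + 2),
            cA a b z ((-1) ^ (ℓ : ℕ) * a (I ℓ)) * wz a b z (I ∘ ℓ.succAbove) := by
  classical
  have hcA : ∀ c : ℂ, cA a b z c = Ideal.Quotient.mk (Iz a b z)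
      (algebraMap (MvPolynomial (Fin (k' + 1)) ℂ) (Rz b z) (C c)) := fun c => rfl
  simp only [wz, pz, hcA, Function.comp_apply, ← map_mul, ← map_prod, ← map_sum]
  refine congrArg (Ideal.Quotient.mk (Iz a b z)) ?_
  have key := aux_key b z I a
  have hterm : ∀ l : Fin (k' + 2),
      algebraMap (MvPolynomial (Fin (k' + 1)) ℂ) (Rz b z)
          (C ((-1) ^ (l : ℕ) * dd b (I ∘ l.succAbove) * a (I l)))
        = algebraMap (MvPolynomial (Fin (k' + 1)) ℂ) (Rz b z) (C ((-1) ^ (l : ℕ) * a (I l)))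
          * algebraMap (MvPolynomial (Fin (k' + 1)) ℂ) (Rz b z)
              (C (dd b (I ∘ l.succAbove))) := by
    intro l
    rw [← map_mul, ← C_mul]
    ring_nf
  calc algebraMap (MvPolynomial (Fin (k' + 1)) ℂ) (Rz b z) (C (fF b z I))
          * Localization.mk (C (a (I 0))) ⟨fpoly b z (I 0), fpoly_mem b z (I 0)⟩
          * (algebraMap (MvPolynomial (Fin (k' + 1)) ℂ) (Rz b z) (C (dd b (I ∘ Fin.succ)))
            * ∏ m : Fin (k' + 1),
                Localization.mk (C (a (I m.succ))) ⟨fpoly b z (I m.succ), fpoly_mem b z (I m.succ)⟩)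
      = algebraMap (MvPolynomial (Fin (k' + 1)) ℂ) (Rz b z) (C (dd b (I ∘ Fin.succ)))
          * (algebraMap (MvPolynomial (Fin (k' + 1)) ℂ) (Rz b z) (C (fF b z I))
            * (Localization.mk (C (a (I 0))) ⟨fpoly b z (I 0), fpoly_mem b z (I 0)⟩
              * ∏ m : Fin (k' + 1),
                  Localization.mk (C (a (I m.succ)))
                    ⟨fpoly b z (I m.succ), fpoly_mem b z (I m.succ)⟩)) := by ring
    _ = algebraMap (MvPolynomial (Fin (k' + 1)) ℂ) (Rz b z) (C (dd b (I ∘ Fin.succ)))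
          * (algebraMap (MvPolynomial (Fin (k' + 1)) ℂ) (Rz b z) (C (fF b z I))
            * ∏ m : Fin (k' + 2),
                Localization.mk (C (a (I m))) ⟨fpoly b z (I m), fpoly_mem b z (I m)⟩) := by
        rw [Fin.prod_univ_succ
          (fun m => Localization.mk (C (a (I m))) ⟨fpoly b z (I m), fpoly_mem b z (I m)⟩)]
    _ = algebraMap (MvPolynomial (Fin (k' + 1)) ℂ) (Rz b z) (C (dd b (I ∘ Fin.succ)))
          * ∑ l : Fin (k' + 2),
              algebraMap (MvPolynomial (Fin (k' + 1)) ℂ) (Rz b z)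
                  (C ((-1) ^ (l : ℕ) * dd b (I ∘ l.succAbove) * a (I l)))
                * ∏ m : Fin (k' + 1),
                    Localization.mk (C (a (I (l.succAbove m))))
                      ⟨fpoly b z (I (l.succAbove m)), fpoly_mem b z (I (l.succAbove m))⟩ := by
        rw [key]
    _ = _ := by
        simp only [Finset.mul_sum]
        refine Finset.sum_congr rfl fun l _ => ?_
        rw [hterm l]
        ring
end
end

section
/- For every z ∈ ℂ^n − Δ there exist complex numbers e_{i_1,...,i_k}, one for each k-element subset {i_1,...,i_k} ⊂ {1,...,n}, such that in the field of rational functions ℂ(t_1,...,t_k) one has the partial fraction decomposition 1/∏_{j=1}^n f_j(t,z) = ∑_{1 ≤ i_1 < ... < i_k ≤ n} e_{i_1,...,i_k} / (f_{i_1}(t,z)⋯f_{i_k}(t,z)). -/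
open MvPolynomial

noncomputable section

lemma exists_b_ne {n k : ℕ} (b : Fin n → Fin k → ℂ) (hk : 1 ≤ k) (hkn : k ≤ n)
    (hd : ∀ l : Fin k → Fin n, Function.Injective l → dd b l ≠ 0) (i : Fin n) :
    ∃ j, b i j ≠ 0 := by
  by_contra h
  push_neg at h
  obtain ⟨S, hiS, -, hS⟩ := Finset.exists_subsuperset_card_eq (t := Finset.univ)
    (Finset.subset_univ {i}) (by simpa using hk) (by simpa using hkn)
  set l : Fin k → Fin n := fun m => (S.orderIsoOfFin hS m : Fin n) with hl
  have hinj : Function.Injective l := fun a b hab => by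
    simpa using (S.orderIsoOfFin hS).injective (Subtype.ext hab)
  obtain ⟨m₀, hm₀⟩ := (S.orderIsoOfFin hS).surjective ⟨i, hiS (Finset.mem_singleton_self i)⟩
  refine hd l hinj ?_
  apply Matrix.det_eq_zero_of_column_eq_zero m₀
  intro j
  have : l m₀ = i := by rw [hl]; simp [hm₀]
  simp [Matrix.of_apply, this, h]

lemma fpoly_ne_zero {n k : ℕ} (b : Fin n → Fin k → ℂ) (z : Fin n → ℂ) (hk : 1 ≤ k) (hkn : k ≤ n)
    (hd : ∀ l : Fin k → Fin n, Function.Injective l → dd b l ≠ 0) (i : Fin n) :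
    fpoly b z i ≠ 0 := by
  obtain ⟨j, hj⟩ := exists_b_ne b hk hkn hd i
  intro h
  apply hj
  have := congrArg (coeff (Finsupp.single j 1)) h
  rw [coeff_zero] at this
  rw [← this, fpoly]
  rw [coeff_add, coeff_sum]
  simp [coeff_C_mul, coeff_X', coeff_C, Finsupp.single_eq_single_iff]
  intro h'
  exact absurd h'.symm (by simp)

lemma exists_comb {n k : ℕ} (b : Fin n → Fin k → ℂ) (z : Fin n → ℂ)
    (I : Fin (k + 1) → Fin n) (hfF : fF b z I ≠ 0) :
    ∃ c : Fin (k + 1) → ℂ, ∑ l, C (c l) * fpoly b z (I l) = (1 : MvPolynomial (Fin k) ℂ) := by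
  set M : Matrix (Fin (k + 1)) (Fin (k + 1)) ℂ :=
    Matrix.of fun j l => Fin.lastCases (z (I l)) (fun j' => b (I l) j') j with hM
  have hdet : M.det = (-1) ^ k * fF b z I := by
    rw [Matrix.det_succ_row M (Fin.last k), fF, Finset.mul_sum]
    refine Finset.sum_congr rfl fun l _ => ?_
    have h1 : M (Fin.last k) l = z (I l) := by simp [hM]
    have h2 : M.submatrix (Fin.last k).succAbove l.succAbove
        = Matrix.of fun j m => b ((I ∘ l.succAbove) m) j := by
      ext j m
      simp [hM, Fin.succAbove_last]
    rw [h1, h2]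
    show ((-1 : ℂ)) ^ ((Fin.last k : ℕ) + (l : ℕ)) * z (I l) * dd b (I ∘ l.succAbove) = _
    rw [Fin.val_last, pow_add]; ring
  have hdet0 : IsUnit M.det := by
    rw [hdet]
    exact (isUnit_iff_ne_zero).mpr (mul_ne_zero (pow_ne_zero _ (by norm_num)) hfF)
  set c : Fin (k + 1) → ℂ := M⁻¹.mulVec (Pi.single (Fin.last k) 1) with hcdef
  have hc : M.mulVec c = Pi.single (Fin.last k) 1 := by
    rw [hcdef, Matrix.mulVec_mulVec, Matrix.mul_nonsing_inv _ hdet0, Matrix.one_mulVec]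
  have hrow : ∀ j : Fin k, ∑ l, c l * b (I l) j = 0 := by
    intro j
    have h := congrFun hc (Fin.castSucc j)
    rw [Matrix.mulVec, Pi.single_eq_of_ne (Fin.castSucc_lt_last j).ne] at h
    rw [← h]
    simp [dotProduct, hM, mul_comm]
  have hlast : ∑ l, c l * z (I l) = 1 := by
    have h := congrFun hc (Fin.last k)
    rw [Matrix.mulVec, Pi.single_eq_same] at h
    rw [← h]
    simp [dotProduct, hM, mul_comm]
  refine ⟨c, ?_⟩
  have step : ∑ l, C (c l) * fpoly b z (I l)
      = (∑ j, C (∑ l, c l * b (I l) j) * X j) + C (∑ l, c l * z (I l)) := by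
    simp only [fpoly, mul_add, Finset.mul_sum, Finset.sum_add_distrib]
    congr 1
    · rw [Finset.sum_comm]
      refine Finset.sum_congr rfl fun j _ => ?_
      rw [map_sum, Finset.sum_mul]
      refine Finset.sum_congr rfl fun l _ => ?_
      rw [C_mul]; ring
    · rw [map_sum]
      exact Finset.sum_congr rfl fun l _ => C_mul.symm
  rw [step, hlast]
  simp [hrow]

lemma key_induction {n k : ℕ} (hk : 1 ≤ k) (hkn : k ≤ n) (b : Fin n → Fin k → ℂ)
    (hd : ∀ l : Fin k → Fin n, Function.Injective l → dd b l ≠ 0)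
    (z : Fin n → ℂ) (hz : z ∉ discr b) :
    ∀ T : Finset (Fin n), k ≤ T.card →
      ∃ e : {s : Finset (Fin n) // s.card = k} → ℂ,
        (∏ j ∈ T, toF (fpoly b z j))⁻¹
          = ∑ s : {s : Finset (Fin n) // s.card = k},
              toF (C (e s)) / ∏ i ∈ s.1, toF (fpoly b z i) := by
  have hg : ∀ i, toF (fpoly b z i) ≠ 0 := by
    intro i h
    exact fpoly_ne_zero b z hk hkn hd i
      (IsFractionRing.injective (MvPolynomial (Fin k) ℂ)
        (FractionRing (MvPolynomial (Fin k) ℂ)) (by rw [map_zero]; exact h))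
  intro T
  induction T using Finset.strongInduction with
  | _ T IH =>
  intro hT
  rcases eq_or_lt_of_le hT with heq | hlt
  · refine ⟨fun s => if s.1 = T then 1 else 0, ?_⟩
    rw [Fintype.sum_eq_single (⟨T, heq.symm⟩ : {s : Finset (Fin n) // s.card = k})]
    · simp [toF, one_div]
    · intro s hs
      have : s.1 ≠ T := fun h => hs (Subtype.ext h)
      simp [this, toF]
  · obtain ⟨S, hST, hS⟩ := Finset.exists_subset_card_eq (show k + 1 ≤ T.card from hlt)
    set I : Fin (k + 1) → Fin n := fun l => (S.orderIsoOfFin hS l : Fin n) with hI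
    have hImono : StrictMono I := fun a b hab => by
      exact_mod_cast (S.orderIsoOfFin hS).strictMono hab
    have hfF : fF b z I ≠ 0 := fun h => hz ⟨I, hImono, h⟩
    obtain ⟨c, hc⟩ := exists_comb b z I hfF
    have hmem : ∀ l, I l ∈ T := fun l => hST (S.orderIsoOfFin hS l).2
    have hcard : ∀ l, k ≤ (T.erase (I l)).card := fun l => by
      rw [Finset.card_erase_of_mem (hmem l)]; omega
    choose e' he' using fun l =>
      IH (T.erase (I l)) (Finset.erase_ssubset (hmem l)) (hcard l)
    refine ⟨fun s => ∑ l, c l * e' l s, ?_⟩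
    have hone : ∑ l, toF (C (c l)) * toF (fpoly b z (I l)) = 1 := by
      have h2 := congrArg toF hc
      simpa [toF, map_sum, map_mul] using h2
    calc (∏ j ∈ T, toF (fpoly b z j))⁻¹
        = (∑ l, toF (C (c l)) * toF (fpoly b z (I l)))
            * (∏ j ∈ T, toF (fpoly b z j))⁻¹ := by rw [hone, one_mul]
      _ = ∑ l, toF (C (c l)) * (∏ j ∈ T.erase (I l), toF (fpoly b z j))⁻¹ := by
          rw [Finset.sum_mul]
          refine Finset.sum_congr rfl fun l _ => ?_
          rw [mul_assoc]
          congr 1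
          rw [← Finset.mul_prod_erase T _ (hmem l), mul_inv,
            mul_inv_cancel_left₀ (hg (I l))]
      _ = ∑ l, toF (C (c l))
            * ∑ s : {s : Finset (Fin n) // s.card = k},
                toF (C (e' l s)) / ∏ i ∈ s.1, toF (fpoly b z i) :=
          Finset.sum_congr rfl fun l _ => by rw [he' l]
      _ = ∑ l, ∑ s : {s : Finset (Fin n) // s.card = k},
            toF (C (c l)) * (toF (C (e' l s)) / ∏ i ∈ s.1, toF (fpoly b z i)) :=
          Finset.sum_congr rfl fun l _ => Finset.mul_sum _ _ _
      _ = ∑ s : {s : Finset (Fin n) // s.card = k}, ∑ l,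
            toF (C (c l)) * (toF (C (e' l s)) / ∏ i ∈ s.1, toF (fpoly b z i)) :=
          Finset.sum_comm
      _ = ∑ s : {s : Finset (Fin n) // s.card = k},
            toF (C (∑ l, c l * e' l s)) / ∏ i ∈ s.1, toF (fpoly b z i) := by
          refine Finset.sum_congr rfl fun s _ => ?_
          have h3 : toF (C (∑ l, c l * e' l s) : MvPolynomial (Fin k) ℂ)
              = ∑ l, toF (C (c l) : MvPolynomial (Fin k) ℂ)
                  * toF (C (e' l s) : MvPolynomial (Fin k) ℂ) := by
            simp [toF, map_sum, map_mul, C_mul]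
          rw [h3, Finset.sum_div]
          exact Finset.sum_congr rfl fun l _ => (mul_div_assoc _ _ _).symm

/-- Fix `n > k ≥ 1` and numbers `b_i^j` with all determinants `d_{i_1,…,i_k}` (distinct
indices) nonzero.  Then for every `z ∈ ℂⁿ − Δ` there exist complex numbers `e_{i_1,…,i_k}`,
one for each `k`-element subset `{i_1,…,i_k} ⊆ {1,…,n}`, such that in the field of rational
functions `ℂ(t_1,…,t_k)` one has the partial fraction decomposition
`1/∏_{j=1}^n f_j(t,z) = ∑_{1 ≤ i_1 < … < i_k ≤ n} e_{i_1,…,i_k}/(f_{i_1}(t,z)⋯f_{i_k}(t,z))`. -/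
theorem stmt16 (n k : ℕ) (hk : 1 ≤ k) (hnk : k < n) (b : Fin n → Fin k → ℂ)
    (hd : ∀ l : Fin k → Fin n, Function.Injective l → dd b l ≠ 0)
    (z : Fin n → ℂ) (hz : z ∉ discr b) :
    ∃ e : {s : Finset (Fin n) // s.card = k} → ℂ,
      (∏ j : Fin n, toF (fpoly b z j))⁻¹
        = ∑ s : {s : Finset (Fin n) // s.card = k},
            toF (C (e s)) / ∏ i ∈ s.1, toF (fpoly b z i) := by
  have := key_induction hk (le_of_lt hnk) b hd z hz Finset.univ (by simpa using le_of_lt hnk)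
  simpa using this
end
end
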